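/- If D1 is a Condorcet domain on A and D2 is a Condorcet domain on B with A, B disjoint, A, B nonempty, |D1| = s and |D2| = t, then there exists a Condorcet domain on A ∪ B of size at least 2·s·t. -/

import Mathlib

/-- The majority relation of a profile `P` of `k` voters: `a` beats `b` if more voters
rank `a` above `b` than rank `b` above `a`. -/
def Maj {α : Type*} {k : ℕ} (P : Fin k → α → α → Prop) (a b : α) : Prop :=
  Nat.card {i : Fin k // P i a b} > Nat.card {i : Fin k // P i b a}

/-- `D` is a Condorcet domain: a set of linear orders (strict total orders) on the
alternatives such that every profile with an odd number of voters drawn from `D`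
has a transitive majority relation. -/
def IsCondorcetDomain {α : Type*} (D : Set (α → α → Prop)) : Prop :=
  (∀ r ∈ D, IsStrictTotalOrder α r) ∧
  ∀ (k : ℕ), Odd k → ∀ P : Fin k → α → α → Prop,
    (∀ i, P i ∈ D) → Transitive (Maj P)

namespace CDAux

variable {α β : Type*}

/-- `u` on top of `v`. -/
def rel0 (u : α → α → Prop) (v : β → β → Prop) : α ⊕ β → α ⊕ β → Prop
  | .inl a, .inl a' => u a a'
  | .inr b, .inr b' => v b b'
  | .inl _, .inr _ => True
  | .inr _, .inl _ => False

/-- `u` on top of `v`, with `b0` moved just above `a0`. -/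
def rel1 (a0 : α) (b0 : β) (u : α → α → Prop) (v : β → β → Prop) : α ⊕ β → α ⊕ β → Prop
  | .inl a, .inl a' => u a a'
  | .inr b, .inr b' => v b b'
  | .inl a, .inr b => ¬(a = a0 ∧ b = b0)
  | .inr b, .inl a => b = b0 ∧ a = a0

lemma sto_asymm {u : α → α → Prop} (hu : IsStrictTotalOrder α u) {a b : α} :
    u a b → ¬ u b a := fun h h' => hu.irrefl a (hu.trans _ _ _ h h')

lemma sto_tri {u : α → α → Prop} (hu : IsStrictTotalOrder α u) (a b : α) :
    u a b ∨ a = b ∨ u b a := by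
  haveI := hu
  exact trichotomous a b

lemma tri_of_or {r : α → α → Prop} {a b : α} (h : r a b ∨ a = b ∨ r b a) :
    ¬ r a b → ¬ r b a → a = b := by
  rcases h with h | h | h
  · exact fun h' => absurd h h'
  · exact fun _ _ => h
  · exact fun _ h' => absurd h h'

lemma exists_bot [Finite α] [Nonempty α] {u : α → α → Prop}
    (hu : IsStrictTotalOrder α u) : ∃ a0, ∀ a, a ≠ a0 → u a a0 := by
  haveI : IsTrans α (Function.swap u) := ⟨fun a b c h h' => hu.trans _ _ _ h' h⟩
  haveI : IsIrrefl α (Function.swap u) := ⟨hu.irrefl⟩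
  obtain ⟨a0, -, h⟩ := (Finite.wellFounded_of_trans_of_irrefl (Function.swap u)).has_min
    Set.univ ⟨Classical.arbitrary α, trivial⟩
  refine ⟨a0, fun a ha => ?_⟩
  have hna := h a trivial
  rcases sto_tri hu a a0 with h' | h' | h'
  · exact h'
  · exact absurd h' ha
  · exact absurd h' hna

lemma exists_top [Finite α] [Nonempty α] {u : α → α → Prop}
    (hu : IsStrictTotalOrder α u) : ∃ a0, ∀ a, a ≠ a0 → u a0 a := by
  have hu' : IsStrictTotalOrder α (Function.swap u) :=
    { trichotomous := fun a b => tri_of_or <| by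
        rcases sto_tri hu a b with h | h | h
        · exact Or.inr (Or.inr h)
        · exact Or.inr (Or.inl h)
        · exact Or.inl h
      irrefl := hu.irrefl
      trans := fun a b c h h' => hu.trans _ _ _ h' h }
  obtain ⟨a0, h⟩ := exists_bot hu'
  exact ⟨a0, fun a ha => h a ha⟩

lemma rel0_sto {u : α → α → Prop} {v : β → β → Prop}
    (hu : IsStrictTotalOrder α u) (hv : IsStrictTotalOrder β v) :
    IsStrictTotalOrder (α ⊕ β) (rel0 u v) := by
  refine { trichotomous := ?_, irrefl := ?_, trans := ?_ }
  · rintro (a | b) (a' | b') <;> refine tri_of_or ?_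
    · rcases sto_tri hu a a' with h | h | h
      · exact Or.inl h
      · exact Or.inr (Or.inl (by rw [h]))
      · exact Or.inr (Or.inr h)
    · exact Or.inl trivial
    · exact Or.inr (Or.inr trivial)
    · rcases sto_tri hv b b' with h | h | h
      · exact Or.inl h
      · exact Or.inr (Or.inl (by rw [h]))
      · exact Or.inr (Or.inr h)
  · rintro (a | b)
    · exact hu.irrefl a
    · exact hv.irrefl b
  · rintro (a | b) (a' | b') (a'' | b'') h h' <;> simp only [rel0] at *
    · exact hu.trans _ _ _ h h'
    · exact hv.trans _ _ _ h h'

lemma rel1_sto {a0 : α} {b0 : β} {u : α → α → Prop} {v : β → β → Prop}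
    (hu : IsStrictTotalOrder α u) (hv : IsStrictTotalOrder β v)
    (ha0 : ∀ a, a ≠ a0 → u a a0) (hb0 : ∀ b, b ≠ b0 → v b0 b) :
    IsStrictTotalOrder (α ⊕ β) (rel1 a0 b0 u v) := by
  refine { trichotomous := ?_, irrefl := ?_, trans := ?_ }
  · rintro (a | b) (a' | b') <;> refine tri_of_or ?_
    · rcases sto_tri hu a a' with h | h | h
      · exact Or.inl h
      · exact Or.inr (Or.inl (by rw [h]))
      · exact Or.inr (Or.inr h)
    · by_cases h : a = a0 ∧ b' = b0
      · exact Or.inr (Or.inr ⟨h.2, h.1⟩)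
      · exact Or.inl h
    · by_cases h : a' = a0 ∧ b = b0
      · exact Or.inl ⟨h.2, h.1⟩
      · exact Or.inr (Or.inr h)
    · rcases sto_tri hv b b' with h | h | h
      · exact Or.inl h
      · exact Or.inr (Or.inl (by rw [h]))
      · exact Or.inr (Or.inr h)
  · rintro (a | b)
    · exact hu.irrefl a
    · exact hv.irrefl b
  · rintro (a | b) (a' | b') (a'' | b'') h h' <;> simp only [rel1] at *
    · exact hu.trans _ _ _ h h'
    · -- a < a' < b'' : show ¬(a = a0 ∧ b'' = b0)
      intro hc
      have ha' : a' ≠ a0 := fun he => h' ⟨he, hc.2⟩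
      exact sto_asymm hu (hc.1 ▸ h) (ha0 a' ha')
    · -- a < b' , b' < a'' : b' = b0, a'' = a0, a ≠ a0
      have hane : a ≠ a0 := fun he => h ⟨he, h'.1⟩
      exact h'.2.symm ▸ ha0 a hane
    · -- a < b', b' < b'' : show ¬(a = a0 ∧ b'' = b0)
      intro hc
      have hb' : b' ≠ b0 := fun he => h ⟨hc.1, he⟩
      exact sto_asymm hv (hc.2 ▸ h') (hb0 b' hb')
    · -- b < a' (so a' = a0), a' < a'' : contradiction with a0 bottom
      have hu0 : u a0 a'' := h.2 ▸ h'
      have h2 : a'' ≠ a0 := fun he => hu.irrefl a0 (he ▸ hu0)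
      exact absurd (ha0 a'' h2) (sto_asymm hu hu0)
    · -- b < a', a' < b'' with a' = a0, b = b0, and b'' ≠ b0 : v b b''
      have hb'' : b'' ≠ b0 := fun he => h' ⟨h.2, he⟩
      exact h.1.symm ▸ hb0 b'' hb''
    · -- b < b', b' < a'' : b' = b0 but v b b0 with b0 top: contradiction
      have hv0 : v b b0 := h'.1 ▸ h
      have hbne : b ≠ b0 := fun he => hv.irrefl b0 (he ▸ hv0)
      exact absurd (hb0 b hbne) (sto_asymm hv hv0)
    · exact hv.trans _ _ _ h h'

lemma rel0_ne_rel1 {u u' : α → α → Prop} {v v' : β → β → Prop} {a0 : α} {b0 : β} :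
    rel0 u v ≠ rel1 a0 b0 u' v' := by
  intro h
  have := congrFun (congrFun h (Sum.inr b0)) (Sum.inl a0)
  simp [rel0, rel1] at this

lemma restA_rel0 {u : α → α → Prop} {v : β → β → Prop} :
    (fun a a' => rel0 u v (.inl a) (.inl a')) = u := rfl

lemma card_add_compl {k : ℕ} (p : Fin k → Prop) :
    Nat.card {i // p i} + Nat.card {i // ¬ p i} = k := by
  classical
  rw [Nat.card_eq_fintype_card, Nat.card_eq_fintype_card, Fintype.card_subtype_compl]
  have h := Fintype.card_subtype_le p
  simp only [Fintype.card_fin] at *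
  omega

lemma card_le_card {k : ℕ} {p q : Fin k → Prop} (h : ∀ i, p i → q i) :
    Nat.card {i // p i} ≤ Nat.card {i // q i} := by
  classical
  rw [Nat.card_eq_fintype_card, Nat.card_eq_fintype_card]
  exact Fintype.card_le_of_embedding (Subtype.impEmbedding _ _ h)

/-- The main transitivity lemma: any set of strict total orders on `α ⊕ β` whose
restrictions lie in Condorcet domains and which satisfies the uniqueness condition
on `B`-over-`A` pairs is a Condorcet domain. -/
lemma maj_trans_of (D1 : Set (α → α → Prop)) (D2 : Set (β → β → Prop))
    (h1 : IsCondorcetDomain D1) (h2 : IsCondorcetDomain D2)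
    (D : Set (α ⊕ β → α ⊕ β → Prop))
    (hSTO : ∀ r ∈ D, IsStrictTotalOrder (α ⊕ β) r)
    (hU : ∀ r ∈ D, ∀ b a b' a', r (.inr b) (.inl a) → r (.inr b') (.inl a') →
        b = b' ∧ a = a')
    (hres1 : ∀ r ∈ D, (fun a a' => r (.inl a) (.inl a')) ∈ D1)
    (hres2 : ∀ r ∈ D, (fun b b' => r (.inr b) (.inr b')) ∈ D2) :
    IsCondorcetDomain D := by
  refine ⟨hSTO, ?_⟩
  intro k hk P hP
  set N : (α ⊕ β) → (α ⊕ β) → ℕ := fun x y => Nat.card {i // P i x y} with hNdef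
  have hST : ∀ i, IsStrictTotalOrder _ (P i) := fun i => hSTO _ (hP i)
  have hasym : ∀ i x y, P i x y → ¬ P i y x := fun i x y => sto_asymm (hST i)
  have htot : ∀ i x y, x ≠ y → ¬ P i y x → P i x y := by
    intro i x y hxy h
    rcases sto_tri (hST i) x y with h' | h' | h'
    · exact h'
    · exact absurd h' hxy
    · exact absurd h' h
  have hsum : ∀ x y, x ≠ y → N x y + N y x = k := by
    intro x y hxy
    have he : N y x = Nat.card {i // ¬ P i x y} :=
      Nat.card_congr (Equiv.subtypeEquivRight
        (fun i => ⟨fun h h' => hasym i x y h' h, fun h => htot i y x hxy.symm h⟩))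
    rw [show N x y = Nat.card {i // P i x y} from rfl, he]
    exact card_add_compl _
  have maj_big : ∀ x y, x ≠ y → Maj P x y → 2 * N x y > k := by
    intro x y hxy hm
    have hs := hsum x y hxy
    have h : N x y > N y x := hm
    omega
  have big_maj : ∀ x y, x ≠ y → 2 * N x y > k → Maj P x y := by
    intro x y hxy h
    have hs := hsum x y hxy
    show N x y > N y x
    omega
  have hodd : ∀ x y, x ≠ y → ¬ Maj P x y → Maj P y x := by
    intro x y hxy hm
    have hs := hsum x y hxy
    have h2 : ¬ (N x y > N y x) := fun hh => hm hh
    obtain ⟨m, hm'⟩ := hk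
    show N y x > N x y
    omega
  intro x y z hxy hyz
  have hnxy : x ≠ y := by rintro rfl; exact lt_irrefl _ hxy
  have hnyz : y ≠ z := by rintro rfl; exact lt_irrefl _ hyz
  by_cases hxz : x = z
  · subst hxz
    have a1 : N x y > N y x := hxy
    have a2 : N y x > N x y := hyz
    omega
  rcases x with a | b <;> rcases y with a' | b' <;> rcases z with a'' | b''
  · -- lll
    have ht := h1.2 k hk (fun i a a' => P i (.inl a) (.inl a'))
      (fun i => hres1 _ (hP i))
    have m1 : Maj (fun i a a' => P i (.inl a) (.inl a')) a a' := hxy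
    have m2 : Maj (fun i a a' => P i (.inl a) (.inl a')) a' a'' := hyz
    exact ht m1 m2
  · -- llr : x = inl a, y = inl a', z = inr b''
    by_contra hcon
    have hzx : Maj P (.inr b'') (.inl a) := hodd _ _ hxz hcon
    have hsub : ∀ i, P i (.inr b'') (.inl a) → P i (.inl a') (.inl a) := by
      intro i hi
      have hno : ¬ P i (.inr b'') (.inl a') := by
        intro h'
        exact hnxy (congrArg Sum.inl (hU _ (hP i) b'' a b'' a' hi h').2)
      exact (hST i).trans _ _ _ (htot i (.inl a') (.inr b'') (by simp) hno) hi
    have hc : 2 * N (.inr b'') (.inl a) > k := maj_big _ _ (Ne.symm hxz) hzx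
    have hle : N (.inr b'') (.inl a) ≤ N (.inl a') (.inl a) := card_le_card hsub
    have hm2 : Maj P (.inl a') (.inl a) := big_maj _ _ (Ne.symm hnxy) (by omega)
    have a1 : N (.inl a) (.inl a') > N (.inl a') (.inl a) := hxy
    have a2 : N (.inl a') (.inl a) > N (.inl a) (.inl a') := hm2
    omega
  · -- lrl : x = inl a, y = inr b', z = inl a''
    have hsub : ∀ i, P i (.inr b') (.inl a'') → P i (.inl a) (.inl a'') := by
      intro i hi
      have hno : ¬ P i (.inr b') (.inl a) := by
        intro h'
        exact hxz (congrArg Sum.inl (hU _ (hP i) b' a'' b' a hi h').2).symm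
      exact (hST i).trans _ _ _ (htot i (.inl a) (.inr b') (by simp) hno) hi
    have hc : 2 * N (.inr b') (.inl a'') > k := maj_big _ _ hnyz hyz
    have hle : N (.inr b') (.inl a'') ≤ N (.inl a) (.inl a'') := card_le_card hsub
    exact big_maj _ _ hxz (by omega)
  · -- lrr : x = inl a, y = inr b', z = inr b''
    by_contra hcon
    have hzx : Maj P (.inr b'') (.inl a) := hodd _ _ hxz hcon
    have hb : b' ≠ b'' := fun he => hnyz (congrArg Sum.inr he)
    have hsub : ∀ i, P i (.inr b'') (.inl a) → P i (.inr b'') (.inr b') := by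
      intro i hi
      have hno : ¬ P i (.inr b') (.inl a) := by
        intro h'
        exact hb ((hU _ (hP i) b'' a b' a hi h').1).symm
      exact (hST i).trans _ _ _ hi (htot i (.inl a) (.inr b') (by simp) hno)
    have hc : 2 * N (.inr b'') (.inl a) > k := maj_big _ _ (Ne.symm hxz) hzx
    have hle : N (.inr b'') (.inl a) ≤ N (.inr b'') (.inr b') := card_le_card hsub
    have hm2 : Maj P (.inr b'') (.inr b') := big_maj _ _ (Ne.symm hnyz) (by omega)
    have a1 : N (.inr b') (.inr b'') > N (.inr b'') (.inr b') := hyz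
    have a2 : N (.inr b'') (.inr b') > N (.inr b') (.inr b'') := hm2
    omega
  · -- rll : x = inr b, y = inl a', z = inl a'' (premises contradictory)
    have ha : a' ≠ a'' := fun he => hnyz (congrArg Sum.inl he)
    have hsub : ∀ i, P i (.inr b) (.inl a') → P i (.inl a'') (.inl a') := by
      intro i hi
      have hno : ¬ P i (.inr b) (.inl a'') := by
        intro h'
        exact ha (hU _ (hP i) b a' b a'' hi h').2
      exact (hST i).trans _ _ _ (htot i (.inl a'') (.inr b) (by simp) hno) hi
    have hc : 2 * N (.inr b) (.inl a') > k := maj_big _ _ hnxy hxy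
    have hle : N (.inr b) (.inl a') ≤ N (.inl a'') (.inl a') := card_le_card hsub
    have hm2 : Maj P (.inl a'') (.inl a') := big_maj _ _ (Ne.symm hnyz) (by omega)
    have a1 : N (.inl a') (.inl a'') > N (.inl a'') (.inl a') := hyz
    have a2 : N (.inl a'') (.inl a') > N (.inl a') (.inl a'') := hm2
    omega
  · -- rlr : x = inr b, y = inl a', z = inr b''
    have hb : b ≠ b'' := fun he => hxz (congrArg Sum.inr he)
    have hsub : ∀ i, P i (.inr b) (.inl a') → P i (.inr b) (.inr b'') := by
      intro i hi
      have hno : ¬ P i (.inr b'') (.inl a') := by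
        intro h'
        exact hb (hU _ (hP i) b a' b'' a' hi h').1
      exact (hST i).trans _ _ _ hi (htot i (.inl a') (.inr b'') (by simp) hno)
    have hc : 2 * N (.inr b) (.inl a') > k := maj_big _ _ hnxy hxy
    have hle : N (.inr b) (.inl a') ≤ N (.inr b) (.inr b'') := card_le_card hsub
    exact big_maj _ _ hxz (by omega)
  · -- rrl : x = inr b, y = inr b', z = inl a'' (premises contradictory)
    have hb : b ≠ b' := fun he => hnxy (congrArg Sum.inr he)
    have hsub : ∀ i, P i (.inr b') (.inl a'') → P i (.inr b') (.inr b) := by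
      intro i hi
      have hno : ¬ P i (.inr b) (.inl a'') := by
        intro h'
        exact hb (hU _ (hP i) b' a'' b a'' hi h').1.symm
      exact (hST i).trans _ _ _ hi (htot i (.inl a'') (.inr b) (by simp) hno)
    have hc : 2 * N (.inr b') (.inl a'') > k := maj_big _ _ hnyz hyz
    have hle : N (.inr b') (.inl a'') ≤ N (.inr b') (.inr b) := card_le_card hsub
    have hm2 : Maj P (.inr b') (.inr b) := big_maj _ _ (Ne.symm hnxy) (by omega)
    have a1 : N (.inr b) (.inr b') > N (.inr b') (.inr b) := hxy
    have a2 : N (.inr b') (.inr b) > N (.inr b) (.inr b') := hm2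
    omega
  · -- rrr
    have ht := h2.2 k hk (fun i b b' => P i (.inr b) (.inr b'))
      (fun i => hres2 _ (hP i))
    have m1 : Maj (fun i b b' => P i (.inr b) (.inr b')) b b' := hxy
    have m2 : Maj (fun i b b' => P i (.inr b) (.inr b')) b' b'' := hyz
    exact ht m1 m2

end CDAux

open CDAux in
/-- Given Condorcet domains of sizes `s` and `t` on disjoint nonempty finite sets of
alternatives (modelled as a disjoint union `α ⊕ β`), there is a Condorcet domain on
the union of size at least `2·s·t`. -/
theorem exists_condorcet_of_size_two_mul {α β : Type*} [Fintype α] [Fintype β]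
    [Nonempty α] [Nonempty β]
    (D1 : Set (α → α → Prop)) (D2 : Set (β → β → Prop))
    (h1 : IsCondorcetDomain D1) (h2 : IsCondorcetDomain D2)
    (s t : ℕ) (hs : Nat.card D1 = s) (ht : Nat.card D2 = t) :
    ∃ D : Set (α ⊕ β → α ⊕ β → Prop),
      IsCondorcetDomain D ∧ 2 * s * t ≤ Nat.card D := by
  classical
  -- the map constructing the 2·s·t orders
  let bot : ↥D1 → α := fun u => Classical.choose (exists_bot (h1.1 u.1 u.2))
  let top : ↥D2 → β := fun v => Classical.choose (exists_top (h2.1 v.1 v.2))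
  have hbot : ∀ u : ↥D1, ∀ a, a ≠ bot u → u.1 a (bot u) :=
    fun u => Classical.choose_spec (exists_bot (h1.1 u.1 u.2))
  have htop : ∀ v : ↥D2, ∀ b, b ≠ top v → v.1 (top v) b :=
    fun v => Classical.choose_spec (exists_top (h2.1 v.1 v.2))
  let f : ↥D1 × ↥D2 × Bool → (α ⊕ β → α ⊕ β → Prop) := fun p =>
    if p.2.2 then rel1 (bot p.1) (top p.2.1) p.1.1 p.2.1.1 else rel0 p.1.1 p.2.1.1
  have hf_cases : ∀ p : ↥D1 × ↥D2 × Bool,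
      f p = rel0 p.1.1 p.2.1.1 ∨ f p = rel1 (bot p.1) (top p.2.1) p.1.1 p.2.1.1 := by
    rintro ⟨u, v, (_ | _)⟩
    · exact Or.inl rfl
    · exact Or.inr rfl
  refine ⟨Set.range f, ?_, ?_⟩
  · -- Condorcet domain
    refine maj_trans_of D1 D2 h1 h2 _ ?_ ?_ ?_ ?_
    · rintro r ⟨p, rfl⟩
      rcases hf_cases p with h | h <;> rw [h]
      · exact rel0_sto (h1.1 _ p.1.2) (h2.1 _ p.2.1.2)
      · exact rel1_sto (h1.1 _ p.1.2) (h2.1 _ p.2.1.2) (hbot p.1) (htop p.2.1)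
    · rintro r ⟨p, rfl⟩ b a b' a' hba hba'
      rcases hf_cases p with h | h <;> rw [h] at hba hba'
      · exact absurd hba (by simp [rel0])
      · simp only [rel1] at hba hba'
        exact ⟨hba.1.trans hba'.1.symm, hba.2.trans hba'.2.symm⟩
    · rintro r ⟨p, rfl⟩
      rcases hf_cases p with h | h <;> rw [h]
      · exact p.1.2
      · exact p.1.2
    · rintro r ⟨p, rfl⟩
      rcases hf_cases p with h | h <;> rw [h]
      · exact p.2.1.2
      · exact p.2.1.2
  · -- cardinality
    have hinj : Function.Injective f := by
      rintro ⟨u, v, c⟩ ⟨u', v', c'⟩ h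
      have hA : ∀ (g g' : α ⊕ β → α ⊕ β → Prop), g = g' →
          (∀ u₀ v₀, (fun a a' => g (Sum.inl a) (Sum.inl a')) = u₀ →
            (fun b b' => g (Sum.inr b) (Sum.inr b')) = v₀ →
            (fun a a' => g' (Sum.inl a) (Sum.inl a')) = u₀ ∧
            (fun b b' => g' (Sum.inr b) (Sum.inr b')) = v₀) := by
        rintro g g' rfl u₀ v₀ h1' h2'
        exact ⟨h1', h2'⟩
      cases c <;> cases c' <;>
        simp only [f, if_true, if_false, Bool.false_eq_true, ite_true, ite_false] at h
      · obtain ⟨he1, he2⟩ := hA _ _ h u.1 v.1 rfl rfl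
        refine Prod.ext (Subtype.ext he1.symm) (Prod.ext (Subtype.ext he2.symm) rfl)
      · exact absurd h rel0_ne_rel1
      · exact absurd h.symm rel0_ne_rel1
      · obtain ⟨he1, he2⟩ := hA _ _ h u.1 v.1 rfl rfl
        refine Prod.ext (Subtype.ext he1.symm) (Prod.ext (Subtype.ext he2.symm) rfl)
    have hcard : Nat.card (Set.range f) = Nat.card (↥D1 × ↥D2 × Bool) :=
      (Nat.card_congr (Equiv.ofInjective f hinj)).symm
    rw [hcard, Nat.card_prod, Nat.card_prod, hs, ht]
    have : Nat.card Bool = 2 := by simp [Nat.card_eq_fintype_card]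
    rw [this]
    ring_nf
    omega
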